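/- Let N = {1, …, n} be a set of agents where each agent i has an interval approval set S_i = {ℓ_i, ℓ_i+1, …, r_i} with 1 ≤ ℓ_i ≤ r_i ≤ n. If a subset N' ⊆ N of agents admits a wonderful partition, then N' admits an earliest-due-date wonderful partition. -/

import Mathlib

open Finset

/-- Map a finpartition of a finset through a permutation preserving the set. -/
def Finpartition.permMap {α : Type*} [DecidableEq α] {N' : Finset α}
    (σ : Equiv.Perm α) (hσ : ∀ k, σ k ∈ N' ↔ k ∈ N')
    (π : Finpartition N') : Finpartition N' where
  parts := π.parts.image (Finset.image σ)
  supIndep := by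
    rw [Finset.supIndep_iff_pairwiseDisjoint]
    intro C hC D hD hCD
    simp only [Finset.mem_coe, Finset.mem_image] at hC hD
    obtain ⟨B, hB, rfl⟩ := hC
    obtain ⟨B', hB', rfl⟩ := hD
    have hBB' : B ≠ B' := fun h => hCD (by rw [h])
    have := π.supIndep.pairwiseDisjoint hB hB' hBB'
    simpa [Function.onFun, Finset.disjoint_image σ.injective] using this
  sup_parts := by
    ext k
    simp only [Finset.mem_sup, Finset.mem_image, id]
    constructor
    · rintro ⟨C, ⟨B, hB, rfl⟩, hk⟩
      obtain ⟨x, hx, rfl⟩ := Finset.mem_image.1 hk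
      exact (hσ x).2 (π.le hB hx)
    · intro hk
      have hk' : σ.symm k ∈ N' := (hσ _).1 (by simpa using hk)
      obtain ⟨B, hB, hmem⟩ := π.exists_mem hk'
      exact ⟨B.image σ, ⟨B, hB, rfl⟩, by
        simpa using Finset.mem_image_of_mem σ hmem⟩
  bot_notMem := by
    simp only [Finset.bot_eq_empty, Finset.mem_image]
    rintro ⟨B, hB, hB0⟩
    rw [Finset.image_eq_empty] at hB0
    subst hB0
    exact π.bot_notMem hB

theorem earliest_due_date_exists (n : ℕ) (ℓ r : Fin n → ℕ)
    (hℓ : ∀ i, 1 ≤ ℓ i) (hlr : ∀ i, ℓ i ≤ r i) (hr : ∀ i, r i ≤ n)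
    (N' : Finset (Fin n))
    (h : ∃ π : Finpartition N',
      ∀ B ∈ π.parts, ∀ i ∈ B, B.card ∈ Finset.Icc (ℓ i) (r i)) :
    ∃ π : Finpartition N',
      (∀ B ∈ π.parts, ∀ i ∈ B, B.card ∈ Finset.Icc (ℓ i) (r i)) ∧
      (∀ i j : Fin n, (r i < r j ∨ (r i = r j ∧ i < j)) →
        ∀ B ∈ π.parts, i ∈ B → ∀ B' ∈ π.parts, j ∈ B' →
          ¬(ℓ i ≤ B'.card ∧ B'.card < B.card)) := by
  classical
  -- weight function, strictly decreasing along ≺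
  set w : Fin n → ℕ := fun i => (n - r i) * (n + 1) + (n - i.val) with hw
  have hwlt : ∀ i j : Fin n, (r i < r j ∨ (r i = r j ∧ i < j)) → w j < w i := by
    intro i j hij
    have hi : (i : ℕ) < n := i.isLt
    have hj : (j : ℕ) < n := j.isLt
    have hri : r i ≤ n := hr i
    have hrj : r j ≤ n := hr j
    rcases hij with h1 | ⟨h1, h2⟩
    · have : n - r j + 1 ≤ n - r i := by omega
      simp only [hw]
      nlinarith [Nat.sub_le n (j : ℕ)]
    · have h2' : (i : ℕ) < (j : ℕ) := h2
      simp only [hw, h1]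
      omega
  have hPex : ∃ m, ∃ π : Finpartition N',
      (∀ B ∈ π.parts, ∀ i ∈ B, B.card ∈ Finset.Icc (ℓ i) (r i)) ∧
      (∑ B ∈ π.parts, ∑ k ∈ B, w k * B.card) = m := by
    obtain ⟨π, hπ⟩ := h
    exact ⟨_, π, hπ, rfl⟩
  obtain ⟨π, hwond, hΦπ⟩ := Nat.find_spec hPex
  refine ⟨π, hwond, ?_⟩
  rintro i j hij B₀ hB₀ hiB₀ B₁ hB₁ hjB₁ ⟨h1, h2⟩
  -- basic facts
  have hij' : i ≠ j := by
    rintro rfl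
    rcases hij with h' | ⟨_, h'⟩ <;> exact absurd h' (lt_irrefl _)
  have hrij : r i ≤ r j := by rcases hij with h' | ⟨h', _⟩ <;> omega
  have hcard0 : B₀.card ∈ Finset.Icc (ℓ i) (r i) := hwond B₀ hB₀ i hiB₀
  have hcard1 : B₁.card ∈ Finset.Icc (ℓ j) (r j) := hwond B₁ hB₁ j hjB₁
  rw [Finset.mem_Icc] at hcard0 hcard1
  have hB01 : B₀ ≠ B₁ := by
    intro hEq
    rw [hEq] at h2
    exact absurd h2 (lt_irrefl _)
  have hjB₀ : j ∉ B₀ := fun hc => hB01 (π.eq_of_mem_parts hB₀ hB₁ hc hjB₁)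
  have hiB₁ : i ∉ B₁ := fun hc => hB01 (π.eq_of_mem_parts hB₀ hB₁ hiB₀ hc)
  have hiN : i ∈ N' := π.le hB₀ hiB₀
  have hjN : j ∈ N' := π.le hB₁ hjB₁
  -- the swap
  set σ : Equiv.Perm (Fin n) := Equiv.swap i j with hσdef
  have hσmem : ∀ k, σ k ∈ N' ↔ k ∈ N' := by
    intro k
    rcases eq_or_ne k i with rfl | hki
    · simp [hσdef, Equiv.swap_apply_left, hiN, hjN]
    rcases eq_or_ne k j with rfl | hkj
    · simp [hσdef, Equiv.swap_apply_right, hiN, hjN]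
    · simp [hσdef, Equiv.swap_apply_of_ne_of_ne hki hkj]
  set π' : Finpartition N' := π.permMap σ hσmem with hπ'def
  have hparts' : π'.parts = π.parts.image (Finset.image σ) := rfl
  -- π' is wonderful
  have hwond' : ∀ B ∈ π'.parts, ∀ k ∈ B, B.card ∈ Finset.Icc (ℓ k) (r k) := by
    rintro C hC k hkC
    rw [hparts', Finset.mem_image] at hC
    obtain ⟨B, hB, rfl⟩ := hC
    rw [Finset.card_image_of_injective B σ.injective]
    obtain ⟨x, hx, rfl⟩ := Finset.mem_image.1 hkC
    rcases eq_or_ne x i with rfl | hxi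
    · have hBB₀ : B = B₀ := π.eq_of_mem_parts hB hB₀ hx hiB₀
      subst hBB₀
      rw [hσdef, Equiv.swap_apply_left, Finset.mem_Icc]
      omega
    rcases eq_or_ne x j with rfl | hxj
    · have hBB₁ : B = B₁ := π.eq_of_mem_parts hB hB₁ hx hjB₁
      subst hBB₁
      rw [hσdef, Equiv.swap_apply_right, Finset.mem_Icc]
      omega
    · rw [hσdef, Equiv.swap_apply_of_ne_of_ne hxi hxj]
      exact hwond B hB x hx
  -- potential computation
  have hΦ' : (∑ B ∈ π'.parts, ∑ k ∈ B, w k * B.card)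
      = ∑ B ∈ π.parts, ∑ k ∈ B, w (σ k) * B.card := by
    rw [hparts']
    rw [Finset.sum_image (fun x _ y _ hxy =>
      Finset.image_injective σ.injective hxy)]
    refine Finset.sum_congr rfl fun B hB => ?_
    rw [Finset.card_image_of_injective B σ.injective]
    rw [Finset.sum_image (fun x _ y _ hxy => σ.injective hxy)]
  have hsum0 : (∑ k ∈ B₀, w (σ k) * B₀.card) + w i * B₀.card
      = (∑ k ∈ B₀, w k * B₀.card) + w j * B₀.card := by
    rw [← Finset.sum_erase_add _ _ hiB₀]
    conv_rhs => rw [← Finset.sum_erase_add _ _ hiB₀]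
    have : ∀ x ∈ B₀.erase i, w (σ x) * B₀.card = w x * B₀.card := by
      intro x hx
      have hxi : x ≠ i := Finset.ne_of_mem_erase hx
      have hxj : x ≠ j := fun hc => hjB₀ (hc ▸ Finset.mem_of_mem_erase hx)
      rw [hσdef, Equiv.swap_apply_of_ne_of_ne hxi hxj]
    rw [Finset.sum_congr rfl this, hσdef, Equiv.swap_apply_left]
    ring
  have hsum1 : (∑ k ∈ B₁, w (σ k) * B₁.card) + w j * B₁.card
      = (∑ k ∈ B₁, w k * B₁.card) + w i * B₁.card := by
    rw [← Finset.sum_erase_add _ _ hjB₁]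
    conv_rhs => rw [← Finset.sum_erase_add _ _ hjB₁]
    have : ∀ x ∈ B₁.erase j, w (σ x) * B₁.card = w x * B₁.card := by
      intro x hx
      have hxj : x ≠ j := Finset.ne_of_mem_erase hx
      have hxi : x ≠ i := fun hc => hiB₁ (hc ▸ Finset.mem_of_mem_erase hx)
      rw [hσdef, Equiv.swap_apply_of_ne_of_ne hxi hxj]
    rw [Finset.sum_congr rfl this, hσdef, Equiv.swap_apply_right]
    ring
  have hB₁e : B₁ ∈ π.parts.erase B₀ := Finset.mem_erase.2 ⟨hB01.symm, hB₁⟩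
  have hsplit : ∀ F : Finset (Fin n) → ℕ,
      ∑ B ∈ π.parts, F B = ∑ B ∈ (π.parts.erase B₀).erase B₁, F B + F B₁ + F B₀ := by
    intro F
    rw [Finset.sum_erase_add _ _ hB₁e, Finset.sum_erase_add _ _ hB₀]
  have hrest : ∑ B ∈ (π.parts.erase B₀).erase B₁, ∑ k ∈ B, w (σ k) * B.card
      = ∑ B ∈ (π.parts.erase B₀).erase B₁, ∑ k ∈ B, w k * B.card := by
    refine Finset.sum_congr rfl fun C hC => ?_
    have hC1 : C ≠ B₁ := Finset.ne_of_mem_erase hC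
    have hC' := Finset.mem_of_mem_erase hC
    have hC0 : C ≠ B₀ := Finset.ne_of_mem_erase hC'
    have hCp : C ∈ π.parts := Finset.mem_of_mem_erase hC'
    refine Finset.sum_congr rfl fun x hx => ?_
    have hxi : x ≠ i := fun hc => hC0 (π.eq_of_mem_parts hCp hB₀ (hc ▸ hx) hiB₀)
    have hxj : x ≠ j := fun hc => hC1 (π.eq_of_mem_parts hCp hB₁ (hc ▸ hx) hjB₁)
    rw [hσdef, Equiv.swap_apply_of_ne_of_ne hxi hxj]
  have hkey : (∑ B ∈ π'.parts, ∑ k ∈ B, w k * B.card) + (w i * B₀.card + w j * B₁.card)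
      = (∑ B ∈ π.parts, ∑ k ∈ B, w k * B.card) + (w j * B₀.card + w i * B₁.card) := by
    rw [hΦ', hsplit (fun B => ∑ k ∈ B, w (σ k) * B.card),
        hsplit (fun B => ∑ k ∈ B, w k * B.card)]
    beta_reduce
    linarith [hsum0, hsum1, hrest]
  have hineq : w j * B₀.card + w i * B₁.card < w i * B₀.card + w j * B₁.card := by
    have hwji : w j < w i := hwlt i j hij
    nlinarith
  have hΦlt : (∑ B ∈ π'.parts, ∑ k ∈ B, w k * B.card)
      < ∑ B ∈ π.parts, ∑ k ∈ B, w k * B.card := by linarith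
  exact Nat.find_min hPex (by rw [← hΦπ]; exact hΦlt) ⟨π', hwond', rfl⟩
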